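/- Let N ≥ 2 workers run GADMM with penalty ρ > 0, generating primal iterates θ_n^k and dual iterates λ_n^k. Let θ* be an optimal consensus point, i.e. θ* minimizes θ ↦ Σ_{n=1}^N f_n(θ) over E. Then for every iteration index k, the optimality gap is upper bounded by Σ_{n=1}^N (f_n(θ_n^{k+1}) − f_n(θ*)) ≤ −Σ_{n=1}^{N−1} ⟨λ_n^{k+1}, r_{n,n+1}^{k+1}⟩ + Σ_{n odd} ⟨s_n^{k+1}, θ* − θ_n^{k+1}⟩, where r_{n,n+1}^{k+1} = θ_n^{k+1} − θ_{n+1}^{k+1} is the primal residual and s_n^{k+1} is the dual residual of head worker n. -/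

import Mathlib

open Finset Filter
open scoped RealInnerProductSpace Topology



lemma gadmm_aux_le (A B C : ℝ) (h : ∀ t : ℝ, 0 < t → t ≤ 1 → A ≤ B + t * C) : A ≤ B := by
  rcases le_or_gt C 0 with hC | hC
  · have := h 1 one_pos le_rfl; linarith
  · by_contra hAB
    push_neg at hAB
    have ht0 : 0 < min 1 ((A - B)/(2*C)) :=
      lt_min one_pos (div_pos (by linarith) (by linarith))
    have h1 := h _ ht0 (min_le_left _ _)
    have h2 : min 1 ((A-B)/(2*C)) * C ≤ ((A-B)/(2*C)) * C :=
      mul_le_mul_of_nonneg_right (min_le_right _ _) hC.le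
    have h3 : ((A-B)/(2*C)) * C = (A-B)/2 := by field_simp
    linarith

theorem gadmm_step {E : Type*} [NormedAddCommGroup E] [InnerProductSpace ℝ E]
    {f : E → ℝ} (hf : ConvexOn ℝ Set.univ f) (ρ : ℝ)
    (a b u v θh : E)
    (hmin : ∀ x : E, f θh + ⟪a, u - θh⟫ + ⟪b, θh - v⟫ + ρ/2 * ‖u - θh‖^2 + ρ/2 * ‖θh - v‖^2
      ≤ f x + ⟪a, u - x⟫ + ⟪b, x - v⟫ + ρ/2 * ‖u - x‖^2 + ρ/2 * ‖x - v‖^2) :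
    ∀ x : E, f θh ≤ f x + ⟪b - a + ρ • (θh - u) + ρ • (θh - v), x - θh⟫ := by
  intro x
  set d := x - θh with hd
  apply gadmm_aux_le _ _ (ρ * ‖d‖^2)
  intro t ht0 ht1
  have hpt : θh + t • d = t • x + (1 - t) • θh := by rw [hd]; module
  have hconv := hf.2 (Set.mem_univ x) (Set.mem_univ θh) ht0.le (sub_nonneg.mpr ht1) (by ring)
  simp only [smul_eq_mul] at hconv
  have hm := hmin (θh + t • d)
  rw [hpt] at hm
  have e1 : ‖u - (t • x + (1 - t) • θh)‖^2
      = ‖u - θh‖^2 - 2*t*⟪u - θh, d⟫ + t^2 * ‖d‖^2 := by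
    have h : u - (t • x + (1 - t) • θh) = (u - θh) - t • d := by rw [hd]; module
    rw [h, norm_sub_sq_real, real_inner_smul_right, norm_smul, Real.norm_eq_abs, mul_pow, sq_abs]
    ring
  have e2 : ‖(t • x + (1 - t) • θh) - v‖^2
      = ‖θh - v‖^2 + 2*t*⟪θh - v, d⟫ + t^2 * ‖d‖^2 := by
    have h : (t • x + (1 - t) • θh) - v = (θh - v) + t • d := by rw [hd]; module
    rw [h, norm_add_sq_real, real_inner_smul_right, norm_smul, Real.norm_eq_abs, mul_pow, sq_abs]
    ring
  have e3 : ⟪a, u - (t • x + (1 - t) • θh)⟫ = ⟪a, u - θh⟫ - t * ⟪a, d⟫ := by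
    have h : u - (t • x + (1 - t) • θh) = (u - θh) - t • d := by rw [hd]; module
    rw [h, inner_sub_right, real_inner_smul_right]
  have e4 : ⟪b, (t • x + (1 - t) • θh) - v⟫ = ⟪b, θh - v⟫ + t * ⟪b, d⟫ := by
    have h : (t • x + (1 - t) • θh) - v = (θh - v) + t • d := by rw [hd]; module
    rw [h, inner_add_right, real_inner_smul_right]
  have e5 : ⟪b - a + ρ • (θh - u) + ρ • (θh - v), d⟫
      = ⟪b, d⟫ - ⟪a, d⟫ - ρ * ⟪u - θh, d⟫ + ρ * ⟪θh - v, d⟫ := by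
    rw [inner_add_left, inner_add_left, inner_sub_left, real_inner_smul_left,
      real_inner_smul_left]
    have : (⟪θh - u, d⟫ : ℝ) = -⟪u - θh, d⟫ := by
      rw [← inner_neg_left]; congr 1; abel
    rw [this]; ring
  rw [e1, e2, e3, e4] at hm
  rw [e5]
  have hmul : t * f θh ≤ t * (f x + (⟪b, d⟫ - ⟪a, d⟫ - ρ * ⟪u - θh, d⟫ + ρ * ⟪θh - v, d⟫)
      + t * (ρ * ‖d‖^2)) := by nlinarith [hm, hconv]
  exact le_of_mul_le_mul_left hmul ht0

theorem gadmm_optimality_gap_upper_bound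
    {E : Type*} [NormedAddCommGroup E] [InnerProductSpace ℝ E] [FiniteDimensional ℝ E]
    (N : ℕ) (hN : 2 ≤ N) (hNeven : Even N)
    (f : ℕ → E → ℝ) (hconv : ∀ n, ConvexOn ℝ Set.univ (f n))
    (ρ : ℝ) (hρ : 0 < ρ)
    (θ lam : ℕ → ℕ → E)
    -- (a) head updates: interior odd workers 1 < n ≤ N
    (hHead : ∀ k n, Odd n → 1 < n → n ≤ N → ∀ x : E,
      f n (θ (k+1) n) + ⟪lam k (n-1), θ k (n-1) - θ (k+1) n⟫
        + ⟪lam k n, θ (k+1) n - θ k (n+1)⟫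
        + ρ/2 * ‖θ k (n-1) - θ (k+1) n‖^2 + ρ/2 * ‖θ (k+1) n - θ k (n+1)‖^2
      ≤ f n x + ⟪lam k (n-1), θ k (n-1) - x⟫ + ⟪lam k n, x - θ k (n+1)⟫
        + ρ/2 * ‖θ k (n-1) - x‖^2 + ρ/2 * ‖x - θ k (n+1)‖^2)
    -- (a) head update for the first worker n = 1
    (hHead1 : ∀ k, ∀ x : E,
      f 1 (θ (k+1) 1) + ⟪lam k 1, θ (k+1) 1 - θ k 2⟫ + ρ/2 * ‖θ (k+1) 1 - θ k 2‖^2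
      ≤ f 1 x + ⟪lam k 1, x - θ k 2⟫ + ρ/2 * ‖x - θ k 2‖^2)
    -- (b) tail updates: even workers 0 < n < N
    (hTail : ∀ k n, Even n → 0 < n → n < N → ∀ x : E,
      f n (θ (k+1) n) + ⟪lam k (n-1), θ (k+1) (n-1) - θ (k+1) n⟫
        + ⟪lam k n, θ (k+1) n - θ (k+1) (n+1)⟫
        + ρ/2 * ‖θ (k+1) (n-1) - θ (k+1) n‖^2 + ρ/2 * ‖θ (k+1) n - θ (k+1) (n+1)‖^2
      ≤ f n x + ⟪lam k (n-1), θ (k+1) (n-1) - x⟫ + ⟪lam k n, x - θ (k+1) (n+1)⟫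
        + ρ/2 * ‖θ (k+1) (n-1) - x‖^2 + ρ/2 * ‖x - θ (k+1) (n+1)‖^2)
    -- (b) tail update for the last worker n = N
    (hTailN : ∀ k, ∀ x : E,
      f N (θ (k+1) N) + ⟪lam k (N-1), θ (k+1) (N-1) - θ (k+1) N⟫
        + ρ/2 * ‖θ (k+1) (N-1) - θ (k+1) N‖^2
      ≤ f N x + ⟪lam k (N-1), θ (k+1) (N-1) - x⟫ + ρ/2 * ‖θ (k+1) (N-1) - x‖^2)
    -- (c) dual updates
    (hDual : ∀ k n, 1 ≤ n → n ≤ N - 1 →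
      lam (k+1) n = lam k n + ρ • (θ (k+1) n - θ (k+1) (n+1)))
    -- θ* is an optimal consensus point
    (θstar : E) (hopt : ∀ x : E, ∑ n ∈ Icc 1 N, f n θstar ≤ ∑ n ∈ Icc 1 N, f n x) :
    ∀ k : ℕ,
      ∑ n ∈ Icc 1 N, (f n (θ (k+1) n) - f n θstar)
        ≤ -∑ n ∈ Icc 1 (N-1), ⟪lam (k+1) n, θ (k+1) n - θ (k+1) (n+1)⟫
          + ∑ n ∈ (Icc 1 N).filter (fun n => Odd n),
              ⟪(if n = 1 then ρ • (θ (k+1) 2 - θ k 2)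
                else ρ • (θ (k+1) (n-1) - θ k (n-1)) + ρ • (θ (k+1) (n+1) - θ k (n+1))),
                θstar - θ (k+1) n⟫ := by
  intro k
  set S : ℕ → E := fun n =>
    if n = 1 then ρ • (θ (k+1) 2 - θ k 2)
    else ρ • (θ (k+1) (n-1) - θ k (n-1)) + ρ • (θ (k+1) (n+1) - θ k (n+1)) with hS
  set G : ℕ → E := fun n =>
    (if n < N then lam (k+1) n else 0) - (if 1 < n then lam (k+1) (n-1) else 0)
      + (if Odd n then S n else 0) with hG
  have key : ∀ n ∈ Icc 1 N, f n (θ (k+1) n) - f n θstar ≤ ⟪G n, θstar - θ (k+1) n⟫ := by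
    intro n hn
    rw [mem_Icc] at hn
    obtain ⟨hn1, hn2⟩ := hn
    rcases Nat.even_or_odd n with he | ho
    · -- even n
      have hnodd : ¬ Odd n := by simp [Nat.odd_iff, Nat.even_iff.mp he]
      have hn2' : 2 ≤ n := by
        rcases Nat.even_iff.mp he with h
        omega
      rcases eq_or_lt_of_le hn2 with hEq | hlt
      · -- n = N
        subst hEq
        have hmin : ∀ x : E,
            f n (θ (k+1) n) + ⟪lam k (n-1), θ (k+1) (n-1) - θ (k+1) n⟫
              + ⟪(0:E), θ (k+1) n - θ (k+1) n⟫
              + ρ/2 * ‖θ (k+1) (n-1) - θ (k+1) n‖^2 + ρ/2 * ‖θ (k+1) n - θ (k+1) n‖^2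
            ≤ f n x + ⟪lam k (n-1), θ (k+1) (n-1) - x⟫ + ⟪(0:E), x - θ (k+1) n⟫
              + ρ/2 * ‖θ (k+1) (n-1) - x‖^2 + ρ/2 * ‖x - θ (k+1) n‖^2 := by
          intro x
          have h1 := hTailN k x
          have h2 : (0:ℝ) ≤ ρ/2 * ‖x - θ (k+1) n‖^2 := by positivity
          simp only [inner_zero_left, sub_self, norm_zero]
          simp only [ne_eq, OfNat.ofNat_ne_zero, not_false_eq_true, zero_pow, mul_zero]
          linarith
        have hg := gadmm_step (hconv n) ρ (lam k (n-1)) 0 (θ (k+1) (n-1)) (θ (k+1) n)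
          (θ (k+1) n) hmin θstar
        have hGeq : G n = 0 - lam k (n-1) + ρ • (θ (k+1) n - θ (k+1) (n-1))
            + ρ • (θ (k+1) n - θ (k+1) n) := by
          have hd := hDual k (n-1) (by omega) (by omega)
          have hn1' : n - 1 + 1 = n := by omega
          rw [hn1'] at hd
          simp only [hG, hS]
          rw [if_neg (lt_irrefl n), if_pos (by omega : 1 < n), if_neg hnodd, hd]
          module
        rw [hGeq]
        linarith [hg]
      · -- even, 0 < n < N
        have hmin := hTail k n he (by omega) hlt
        have hg := gadmm_step (hconv n) ρ (lam k (n-1)) (lam k n) (θ (k+1) (n-1))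
          (θ (k+1) (n+1)) (θ (k+1) n) hmin θstar
        have hGeq : G n = lam k n - lam k (n-1) + ρ • (θ (k+1) n - θ (k+1) (n-1))
            + ρ • (θ (k+1) n - θ (k+1) (n+1)) := by
          have hd1 := hDual k (n-1) (by omega) (by omega)
          have hd2 := hDual k n (by omega) (by omega)
          have hn1' : n - 1 + 1 = n := by omega
          rw [hn1'] at hd1
          simp only [hG, hS]
          rw [if_pos hlt, if_pos (by omega : 1 < n), if_neg hnodd, hd1, hd2]
          module
        rw [hGeq]
        linarith [hg]
    · -- odd n
      rcases eq_or_lt_of_le hn1 with hEq | hlt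
      · -- n = 1
        have h1 : n = 1 := hEq.symm
        subst h1
        have hmin : ∀ x : E,
            f 1 (θ (k+1) 1) + ⟪(0:E), θ (k+1) 1 - θ (k+1) 1⟫
              + ⟪lam k 1, θ (k+1) 1 - θ k 2⟫
              + ρ/2 * ‖θ (k+1) 1 - θ (k+1) 1‖^2 + ρ/2 * ‖θ (k+1) 1 - θ k 2‖^2
            ≤ f 1 x + ⟪(0:E), θ (k+1) 1 - x⟫ + ⟪lam k 1, x - θ k 2⟫
              + ρ/2 * ‖θ (k+1) 1 - x‖^2 + ρ/2 * ‖x - θ k 2‖^2 := by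
          intro x
          have h1 := hHead1 k x
          have h2 : (0:ℝ) ≤ ρ/2 * ‖θ (k+1) 1 - x‖^2 := by positivity
          simp only [inner_zero_left, sub_self, norm_zero]
          simp only [ne_eq, OfNat.ofNat_ne_zero, not_false_eq_true, zero_pow, mul_zero]
          linarith
        have hg := gadmm_step (hconv 1) ρ 0 (lam k 1) (θ (k+1) 1) (θ k 2)
          (θ (k+1) 1) hmin θstar
        have hGeq : G 1 = lam k 1 - 0 + ρ • (θ (k+1) 1 - θ (k+1) 1)
            + ρ • (θ (k+1) 1 - θ k 2) := by
          have hd := hDual k 1 le_rfl (by omega)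
          simp only [hG, hS]
          rw [if_pos (by omega : 1 < N), if_neg (lt_irrefl 1), if_pos (odd_one)]
          simp only [reduceIte]
          rw [hd]
          module
        rw [hGeq]
        linarith [hg]
      · -- odd, 1 < n ≤ N; since N even and n odd, n < N
        have hnN : n < N := by
          rcases Nat.odd_iff.mp ho with h
          rcases Nat.even_iff.mp hNeven with h'
          omega
        have hmin := hHead k n ho hlt hn2
        have hg := gadmm_step (hconv n) ρ (lam k (n-1)) (lam k n) (θ k (n-1))
          (θ k (n+1)) (θ (k+1) n) hmin θstar
        have hGeq : G n = lam k n - lam k (n-1) + ρ • (θ (k+1) n - θ k (n-1))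
            + ρ • (θ (k+1) n - θ k (n+1)) := by
          have hd1 := hDual k (n-1) (by omega) (by omega)
          have hd2 := hDual k n (by omega) (by omega)
          have hn1' : n - 1 + 1 = n := by omega
          rw [hn1'] at hd1
          simp only [hG, hS]
          rw [if_pos hnN, if_pos hlt, if_pos ho, if_neg (by omega : ¬ n = 1), hd1, hd2]
          module
        rw [hGeq]
        linarith [hg]
  calc ∑ n ∈ Icc 1 N, (f n (θ (k+1) n) - f n θstar)
      ≤ ∑ n ∈ Icc 1 N, ⟪G n, θstar - θ (k+1) n⟫ := Finset.sum_le_sum key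
    _ = _ := by
        have expand : ∀ n, ⟪G n, θstar - θ (k+1) n⟫
            = (if n < N then ⟪lam (k+1) n, θstar - θ (k+1) n⟫ else 0)
              - (if 1 < n then ⟪lam (k+1) (n-1), θstar - θ (k+1) n⟫ else 0)
              + (if Odd n then ⟪S n, θstar - θ (k+1) n⟫ else 0) := by
          intro n
          simp only [hG]
          split_ifs <;> simp [inner_add_left, inner_sub_left]
        rw [Finset.sum_congr rfl (fun n _ => expand n), Finset.sum_add_distrib,
          Finset.sum_sub_distrib]
        have hf1 : (Icc 1 N).filter (fun n => n < N) = Icc 1 (N-1) := by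
          ext m; simp only [Finset.mem_filter, Finset.mem_Icc]; omega
        have hf2 : (Icc 1 N).filter (fun n => 1 < n) = Icc 2 N := by
          ext m; simp only [Finset.mem_filter, Finset.mem_Icc]; omega
        rw [← Finset.sum_filter, ← Finset.sum_filter, ← Finset.sum_filter, hf1, hf2]
        have hre : ∑ n ∈ Icc 2 N, ⟪lam (k+1) (n-1), θstar - θ (k+1) n⟫
            = ∑ n ∈ Icc 1 (N-1), ⟪lam (k+1) n, θstar - θ (k+1) (n+1)⟫ := by
          apply Finset.sum_nbij' (i := fun n => n - 1) (j := fun n => n + 1)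
          · intro a ha; simp only [Finset.mem_Icc] at *; omega
          · intro a ha; simp only [Finset.mem_Icc] at *; omega
          · intro a ha; simp only [Finset.mem_Icc] at ha; omega
          · intro a ha; simp only [Finset.mem_Icc] at ha; omega
          · intro a ha
            simp only [Finset.mem_Icc] at ha
            have : a - 1 + 1 = a := by omega
            rw [this]
        rw [hre, ← Finset.sum_sub_distrib]
        congr 1
        · rw [← Finset.sum_neg_distrib]
          apply Finset.sum_congr rfl
          intro n _
          rw [← inner_sub_right, ← inner_neg_right]
          congr 1
          abel
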